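/- For any finite rooted plane tree T, the height of T is at most 3 times the sum over all nodes v of T of 1/S(v), where S(v) is the breadth-first queue length just before v is explored. -/

import Mathlib

inductive PlaneTree : Type
  | node : List PlaneTree → PlaneTree

namespace PlaneTree

def children : PlaneTree → List PlaneTree
  | node ts => ts

mutual
  def height : PlaneTree → ℕ
    | node ts => heightList ts
  def heightList : List PlaneTree → ℕ
    | [] => 0
    | t :: ts => max (height t + 1) (heightList ts)
end

mutual
  def size : PlaneTree → ℕ
    | node ts => 1 + sizeList ts
  def sizeList : List PlaneTree → ℕ
    | [] => 0
    | t :: ts => size t + sizeList ts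
end

def level : ℕ → PlaneTree → List PlaneTree
  | 0, t => [t]
  | n + 1, t => (children t).flatMap (level n)

def bfsList (t : PlaneTree) : List PlaneTree :=
  (List.range (height t + 1)).flatMap (fun n => level n t)

def S (t : PlaneTree) (i : ℕ) : ℤ :=
  1 + ∑ j ∈ Finset.range i, ((((bfsList t).getD j (node [])).children.length : ℤ) - 1)

def width (t : PlaneTree) : ℕ :=
  (Finset.range (height t + 1)).sup (fun n => (level n t).length)

end PlaneTree

namespace PlaneTree

-- auxiliary

lemma level_zero (t : PlaneTree) : level 0 t = [t] := rfl

lemma level_succ (k : ℕ) (t : PlaneTree) :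
    level (k+1) t = (children t).flatMap (level k) := rfl

lemma height_node (ts : List PlaneTree) : height (node ts) = heightList ts := by
  rw [height]

lemma heightList_cons (s : PlaneTree) (ts : List PlaneTree) :
    heightList (s :: ts) = max (height s + 1) (heightList ts) := by
  rw [heightList]

/-- sum of children counts on a level = size of next level -/
lemma childsum : ∀ (k : ℕ) (t : PlaneTree),
    ((level k t).map (fun v => v.children.length)).sum = (level (k+1) t).length := by
  intro k
  induction k with
  | zero =>
    intro t
    rw [level_succ, level_zero]
    simp only [List.length_flatMap, List.map_cons, List.map_nil, List.sum_cons, List.sum_nil]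
    induction t.children with
    | nil => simp
    | cons c cs ih2 =>
      simp [Function.comp_def, level_zero, ← ih2]
      omega
  | succ k ih =>
    intro t
    rw [level_succ k.succ t, level_succ k t, List.map_flatMap, List.length_flatMap]
    induction (children t) with
    | nil => simp
    | cons c cs ih2 =>
      simp only [List.flatMap_cons, List.sum_append, List.map_cons, List.map_append,
        List.sum_cons, ih2]
      rw [ih c]

lemma le_heightList {ts : List PlaneTree} {s : PlaneTree} (hs : s ∈ ts) :
    height s + 1 ≤ heightList ts := by
  induction ts with
  | nil => simp at hs
  | cons a l ih =>
    rw [heightList_cons]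
    rcases List.mem_cons.mp hs with h | h
    · subst h; exact le_max_left _ _
    · exact le_trans (ih h) (le_max_right _ _)

lemma heightList_attained {ts : List PlaneTree} (h : heightList ts ≠ 0) :
    ∃ s ∈ ts, heightList ts = height s + 1 := by
  induction ts with
  | nil => rw [heightList] at h; simp at h
  | cons a l ih =>
    rw [heightList_cons] at *
    by_cases hc : heightList l ≤ height a + 1
    · exact ⟨a, List.mem_cons_self, max_eq_left hc⟩
    · push_neg at hc
      obtain ⟨s, hs, hh⟩ := ih (by omega)
      exact ⟨s, List.mem_cons_of_mem _ hs, by omega⟩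

lemma level_ne_nil : ∀ (k : ℕ) (t : PlaneTree), k ≤ height t → level k t ≠ [] := by
  intro k
  induction k with
  | zero => intro t _; rw [level_zero]; simp
  | succ k ih =>
    intro t hk
    cases t with
    | node ts =>
      rw [height_node] at hk
      obtain ⟨s, hs, hh⟩ := heightList_attained (ts := ts) (by omega)
      have hks : k ≤ height s := by omega
      have := ih s hks
      obtain ⟨x, hx⟩ := List.exists_mem_of_ne_nil _ this
      rw [level_succ]
      apply List.ne_nil_of_mem (a := x)
      exact List.mem_flatMap.mpr ⟨s, hs, hx⟩

lemma level_eq_nil : ∀ (k : ℕ) (t : PlaneTree), height t < k → level k t = [] := by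
  intro k
  induction k with
  | zero => intro t h; omega
  | succ k ih =>
    intro t h
    cases t with
    | node ts =>
      rw [level_succ]
      rw [List.flatMap_eq_nil_iff]
      intro s hs
      rw [show (node ts).children = ts from rfl] at hs
      apply ih
      have := le_heightList hs
      rw [height_node] at h
      omega


def lv (t : PlaneTree) (k : ℕ) : ℕ := (level k t).length

def Bpre (t : PlaneTree) (k : ℕ) : List PlaneTree := (List.range k).flatMap (fun r => level r t)

def Npref (t : PlaneTree) (k : ℕ) : ℕ := (Bpre t k).length

lemma lv_zero (t : PlaneTree) : lv t 0 = 1 := rfl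

lemma Bpre_succ (t : PlaneTree) (k : ℕ) : Bpre t (k+1) = Bpre t k ++ level k t := by
  rw [Bpre, List.range_succ, List.flatMap_append]
  simp [Bpre]

lemma Npref_succ (t : PlaneTree) (k : ℕ) : Npref t (k+1) = Npref t k + lv t k := by
  rw [Npref, Bpre_succ, List.length_append]; rfl

lemma Npref_mono (t : PlaneTree) {a b : ℕ} (h : a ≤ b) : Npref t a ≤ Npref t b := by
  induction b with
  | zero => have : a = 0 := Nat.le_zero.mp h; subst this; exact le_refl _
  | succ b ih =>
    rcases Nat.lt_or_ge a (b+1) with h' | h'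
    · exact le_trans (ih (by omega)) (by rw [Npref_succ]; omega)
    · have : a = b + 1 := by omega
      subst this; exact le_refl _

lemma bfs_eq (t : PlaneTree) : bfsList t = Bpre t (height t + 1) := rfl

lemma bfs_split (t : PlaneTree) {k : ℕ} (hk : k ≤ height t) :
    ∃ rest, bfsList t = Bpre t k ++ ((level k t) ++ rest) := by
  obtain ⟨d, hd⟩ : ∃ d, height t + 1 = (k + 1) + d := ⟨height t - k, by omega⟩
  refine ⟨(List.map (fun x => k + 1 + x) (List.range d)).flatMap (fun r => level r t), ?_⟩
  rw [bfs_eq, hd, Bpre, List.range_add, List.flatMap_append]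
  have h2 : ((List.range (k + 1)).flatMap fun r => level r t) = Bpre t k ++ level k t :=
    Bpre_succ t k
  rw [h2, List.append_assoc]

lemma bfs_take (t : PlaneTree) {k j : ℕ} (hk : k ≤ height t) (hj : j ≤ lv t k) :
    (bfsList t).take (Npref t k + j) = Bpre t k ++ (level k t).take j := by
  obtain ⟨rest, hr⟩ := bfs_split t hk
  rw [hr, Npref, List.take_append, List.take_of_length_le (by omega), Nat.add_sub_cancel_left,
    List.take_append_of_le_length hj]

lemma Bsum (t : PlaneTree) : ∀ k : ℕ,
    ((Bpre t k).map (fun v => v.children.length)).sum + 1 = Npref t k + lv t k := by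
  intro k
  induction k with
  | zero => simp [Bpre, Npref, lv_zero]
  | succ k ih =>
    rw [Bpre_succ, List.map_append, List.sum_append, childsum, Npref_succ]
    have : ((level (k+1) t).length) = lv t (k+1) := rfl
    omega

lemma take_map_sum_le {α : Type*} (l : List α) (j : ℕ) (f : α → ℕ) :
    ((l.take j).map f).sum ≤ (l.map f).sum := by
  conv_rhs => rw [← List.take_append_drop j l]
  rw [List.map_append, List.sum_append]
  omega

lemma sum_range_getD {α : Type*} (l : List α) (d : α) (f : α → ℤ) :
    ∀ i : ℕ, i ≤ l.length →
      ∑ j ∈ Finset.range i, f (l.getD j d) = ((l.take i).map f).sum := by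
  intro i
  induction i with
  | zero => simp
  | succ i ih =>
    intro h
    rw [Finset.sum_range_succ, ih (by omega), List.getD_eq_getElem l d (by omega),
      List.take_succ, List.getElem?_eq_getElem (by omega : i < l.length)]
    rw [List.map_append, List.sum_append, Option.toList_some, List.map_singleton,
      List.sum_singleton]

lemma S_eq (t : PlaneTree) {k j : ℕ} (hk : k ≤ height t) (hj : j < lv t k) :
    ∃ p : ℕ, p ≤ lv t (k+1) ∧ S t (Npref t k + j) = ((lv t k : ℤ) - j) + p := by
  set clen : PlaneTree → ℕ := fun v => v.children.length with hclen
  refine ⟨(((level k t).take j).map clen).sum, ?_, ?_⟩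
  · calc (((level k t).take j).map clen).sum ≤ ((level k t).map clen).sum :=
          take_map_sum_le _ _ _
      _ = lv t (k+1) := childsum k t
  · have hle : Npref t k + j ≤ (bfsList t).length := by
      have h1 : Npref t k + j ≤ Npref t (k+1) := by rw [Npref_succ]; omega
      have h2 : Npref t (k+1) ≤ Npref t (height t + 1) := Npref_mono t (by omega)
      have h3 : (bfsList t).length = Npref t (height t + 1) := rfl
      omega
    rw [S]
    have hsplit : ∀ i : ℕ, ∑ j' ∈ Finset.range i,
        ((((bfsList t).getD j' (node [])).children.length : ℤ) - 1)
        = (∑ j' ∈ Finset.range i, (((bfsList t).getD j' (node [])).children.length : ℤ)) - i := by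
      intro i
      rw [Finset.sum_sub_distrib]
      simp
    rw [hsplit]
    rw [sum_range_getD (bfsList t) (node []) (fun v => (clen v : ℤ)) _ hle]
    rw [bfs_take t hk (by omega), List.map_append, List.sum_append]
    have hcast : ∀ m : List PlaneTree, (m.map (fun v => (clen v : ℤ))).sum = ((m.map clen).sum : ℤ) := by
      intro m
      rw [Nat.cast_list_sum, List.map_map]
      rfl
    rw [hcast, hcast]
    have hB := Bsum t k
    rw [← hclen] at hB
    have hN : Npref t (k+1) = Npref t k + lv t k := Npref_succ t k
    omega


lemma log_key {x y : ℝ} (hx : 2 ≤ x) (hy : 1 ≤ y) :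
    1/3 + (Real.log x - Real.log y)/2 ≤ Real.log (x + y - 1) - Real.log y := by
  have h1 : 2*x*y ≤ (x+y-1)^2 := by nlinarith [sq_nonneg (x-1), sq_nonneg (y-1)]
  have hpos : (0:ℝ) < x + y - 1 := by linarith
  have h2 : Real.log (2*x*y) ≤ Real.log ((x+y-1)^2) := Real.log_le_log (by positivity) h1
  rw [Real.log_pow] at h2
  have h3 : Real.log (2*x*y) = Real.log 2 + Real.log x + Real.log y := by
    rw [Real.log_mul (by positivity) (by positivity),
      Real.log_mul (by norm_num) (by positivity)]
  have hlog2 : (2:ℝ)/3 ≤ Real.log 2 := by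
    have := Real.log_two_gt_d9; linarith
  push_cast at h2
  linarith

lemma harmonic_log (M : ℝ) (hM : 0 ≤ M) : ∀ n : ℕ,
    Real.log ((n:ℝ) + M + 1) - Real.log (M + 1) ≤ ∑ j ∈ Finset.range n, 1/((j:ℝ) + M + 1) := by
  intro n
  induction n with
  | zero => simp
  | succ n ih =>
    rw [Finset.sum_range_succ]
    have hw : (0:ℝ) < (n:ℝ) + M + 1 := by positivity
    have key : Real.log (((n:ℝ) + 1) + M + 1) - Real.log ((n:ℝ) + M + 1)
        ≤ 1/((n:ℝ) + M + 1) := by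
      have hq : (0:ℝ) < (((n:ℝ) + 1) + M + 1)/((n:ℝ) + M + 1) := by positivity
      have := Real.log_le_sub_one_of_pos hq
      rw [Real.log_div (by positivity) (by positivity)] at this
      have e : (((n:ℝ) + 1) + M + 1)/((n:ℝ) + M + 1) - 1 = 1/((n:ℝ) + M + 1) := by
        field_simp
        ring
      linarith
    push_cast
    linarith

lemma level_bound (a b : ℕ) (ha : 1 ≤ a) :
    1/3 + (Real.log ((a:ℝ) + 1) - Real.log ((b:ℝ) + 1))/2
      ≤ ∑ j ∈ Finset.range a, 1/((a:ℝ) - (j:ℝ) + (b:ℝ)) := by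
  have hrefl : ∑ j ∈ Finset.range a, 1/((a:ℝ) - (j:ℝ) + (b:ℝ))
      = ∑ j ∈ Finset.range a, 1/((j:ℝ) + (b:ℝ) + 1) := by
    rw [← Finset.sum_range_reflect (fun j => 1/((j:ℝ) + (b:ℝ) + 1)) a]
    apply Finset.sum_congr rfl
    intro j hj
    rw [Finset.mem_range] at hj
    have h1 : a - 1 - j = a - (j+1) := by omega
    have h2 : ((a - (j+1) : ℕ) : ℝ) = (a:ℝ) - ((j:ℝ)+1) := by
      have : j + 1 ≤ a := by omega
      push_cast [Nat.cast_sub this]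
      ring
    simp only [h1, h2]
    ring_nf
  rw [hrefl]
  have hh := harmonic_log (b:ℝ) (Nat.cast_nonneg b) a
  have hk := log_key (x := (a:ℝ)+1) (y := (b:ℝ)+1)
    (by exact_mod_cast Nat.succ_le_succ ha) (le_add_of_nonneg_left (Nat.cast_nonneg b))
  have e : (a:ℝ) + 1 + ((b:ℝ)+1) - 1 = (a:ℝ) + (b:ℝ) + 1 := by ring
  rw [e] at hk
  linarith

lemma sum_range_add' (g : ℕ → ℝ) (A : ℕ) : ∀ B : ℕ,
    ∑ i ∈ Finset.range (A+B), g i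
      = ∑ i ∈ Finset.range A, g i + ∑ j ∈ Finset.range B, g (A + j) := by
  intro B
  induction B with
  | zero => simp
  | succ B ih =>
    rw [← Nat.add_assoc, Finset.sum_range_succ, ih, Finset.sum_range_succ]
    ring

lemma sum_blocks (t : PlaneTree) (g : ℕ → ℝ) : ∀ K : ℕ,
    ∑ i ∈ Finset.range (Npref t K), g i
      = ∑ k ∈ Finset.range K, ∑ j ∈ Finset.range (lv t k), g (Npref t k + j) := by
  intro K
  induction K with
  | zero => simp [Npref, Bpre]
  | succ K ih =>
    rw [Npref_succ, sum_range_add', ih, Finset.sum_range_succ]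


end PlaneTree

open PlaneTree in
theorem stmt2 (t : PlaneTree) :
    (height t : ℝ) ≤ 3 * ∑ i ∈ Finset.range (bfsList t).length, 1 / (S t i : ℝ) := by
  have hlen : (bfsList t).length = Npref t (height t + 1) := rfl
  rw [hlen, sum_blocks]
  set h := height t with hh
  have hblock : ∀ k ∈ Finset.range (h+1),
      1/3 + (Real.log ((lv t k : ℝ) + 1) - Real.log ((lv t (k+1) : ℝ) + 1))/2
        ≤ ∑ j ∈ Finset.range (lv t k), 1/(S t (Npref t k + j) : ℝ) := by
    intro k hk
    rw [Finset.mem_range] at hk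
    have hk' : k ≤ h := by omega
    have h1 : 1 ≤ lv t k := List.length_pos_iff.mpr (level_ne_nil k t hk')
    refine le_trans (level_bound (lv t k) (lv t (k+1)) h1) ?_
    apply Finset.sum_le_sum
    intro j hj
    rw [Finset.mem_range] at hj
    obtain ⟨p, hp, hS⟩ := S_eq t hk' hj
    rw [hS]
    have hcast : ((((lv t k : ℤ) - (j:ℤ)) + (p:ℤ) : ℤ) : ℝ)
        = (lv t k : ℝ) - (j:ℝ) + (p:ℝ) := by push_cast; ring
    rw [hcast]
    have hj' : (j:ℝ) + 1 ≤ (lv t k : ℝ) := by exact_mod_cast hj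
    have hp' : (p:ℝ) ≤ (lv t (k+1) : ℝ) := by exact_mod_cast hp
    have hppos : (0:ℝ) ≤ (p:ℝ) := by positivity
    apply one_div_le_one_div_of_le
    · linarith
    · linarith
  have total := Finset.sum_le_sum hblock
  have htel : ∑ k ∈ Finset.range (h+1),
      (Real.log ((lv t k : ℝ) + 1) - Real.log ((lv t (k+1) : ℝ) + 1))
      = Real.log ((lv t 0 : ℝ) + 1) - Real.log ((lv t (h+1) : ℝ) + 1) :=
    Finset.sum_range_sub' (fun k => Real.log ((lv t k : ℝ) + 1)) (h+1)
  have hend : lv t (h+1) = 0 := by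
    have := level_eq_nil (h+1) t (by omega)
    rw [lv, this]
    rfl
  rw [hend] at htel
  simp only [Nat.cast_zero, zero_add, Real.log_one, sub_zero] at htel
  have hsum : ∑ k ∈ Finset.range (h+1),
      (1/3 + (Real.log ((lv t k : ℝ) + 1) - Real.log ((lv t (k+1) : ℝ) + 1))/2)
      = (h+1) * (1/3) + (Real.log ((lv t 0 : ℝ) + 1))/2 := by
    rw [Finset.sum_add_distrib, Finset.sum_const, Finset.card_range, ← Finset.sum_div, htel]
    push_cast [nsmul_eq_mul]
    ring
  rw [hsum] at total
  have hlog0 : 0 ≤ Real.log ((lv t 0 : ℝ) + 1) := Real.log_nonneg (le_add_of_nonneg_left (Nat.cast_nonneg _))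
  linarith
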